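/- With p the specified cubic root and the certificate functions A and B as defined, the objective value Φ = 4∫₀¹ (A(t) + B(t)) dt satisfies the cubic equation 401Φ³ − 1744Φ² + 2240Φ − 768 = 0, and moreover 157/100 < Φ < 158/100. -/

import Mathlib

lemma quad_integral (α β γ a b : ℝ) :
    ∫ t in a..b, (α * t ^ 2 + β * t + γ) = α * (b ^ 3 - a ^ 3) / 3 + β * (b ^ 2 - a ^ 2) / 2 + γ * (b - a) := by
  have h1 : IntervalIntegrable (fun t : ℝ => α * t ^ 2) MeasureTheory.volume a b :=
    (Continuous.intervalIntegrable (by continuity) a b)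
  have h2 : IntervalIntegrable (fun t : ℝ => β * t) MeasureTheory.volume a b :=
    (Continuous.intervalIntegrable (by continuity) a b)
  have h3 : IntervalIntegrable (fun _ : ℝ => γ) MeasureTheory.volume a b :=
    intervalIntegrable_const
  rw [intervalIntegral.integral_add (h1.add h2) h3, intervalIntegral.integral_add h1 h2,
    intervalIntegral.integral_const_mul, intervalIntegral.integral_const_mul,
    integral_pow, integral_id, intervalIntegral.integral_const,
    smul_eq_mul]
  norm_num; ring

lemma piece_eq (F : ℝ → ℝ) (α β γ a b : ℝ)
    (h : Set.EqOn F (fun t => α * t ^ 2 + β * t + γ) (Set.uIcc a b)) :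
    IntervalIntegrable F MeasureTheory.volume a b ∧
      ∫ t in a..b, F t = α * (b ^ 3 - a ^ 3) / 3 + β * (b ^ 2 - a ^ 2) / 2 + γ * (b - a) := by
  have hc : Continuous fun t : ℝ => α * t ^ 2 + β * t + γ := by continuity
  refine ⟨(hc.intervalIntegrable a b).congr ?_, ?_⟩
  · exact fun x hx => (h (Set.uIoc_subset_uIcc hx)).symm
  · rw [intervalIntegral.integral_congr h, quad_integral]



set_option maxHeartbeats 4000000 in
/-- With `p` the specified cubic root and the certificate functions `A` and `B` as in
the odd-fat continuum certificate, the objective value `Φ = 4∫₀¹ (A(t) + B(t)) dt`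
satisfies `401Φ³ − 1744Φ² + 2240Φ − 768 = 0` and `157/100 < Φ < 158/100`. -/
theorem certificate_objective_value (p c d e f g CC DD EE HH K r s l q n1 nu n2 : ℝ)
    (hproot : 401 * p ^ 3 - 331 * p ^ 2 + 19 * p + 7 = 0)
    (hpmem : p ∈ Set.Ioo (2115883 / 10 ^ 7 : ℝ) (2115884 / 10 ^ 7))
    (hc : c = (187 * p ^ 3 - 211 * p ^ 2 + 61 * p - 5) / (2 * (71 * p ^ 2 - 66 * p + 11)))
    (hd : d = 1 + p - c)
    (he : e = (2 * c + 3 * p - 1) / 4)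
    (hf : f = (-2 * c + 5 * p + 1) / 4)
    (hg : g = (1 - 3 * p + 2 * c) / 2)
    (hCC : CC = -c ^ 2 + c * e / 2 + c * f / 2 + d ^ 2 - d * e / 2 - d * f / 2
      - 2 * d - g ^ 2 + 2 * p ^ 2 + 1)
    (hDD : DD = -c - d - 2 * g + 4 * p)
    (hEE : EE = -2 * c ^ 2 + c * e + c * f - e * f / 2 - e / 2 - f / 2
      - g ^ 2 / 2 + 2 * p ^ 2)
    (hHH : HH = -2 * c - g + 4 * p - 1)
    (hK1 : K * CC + r * DD = 1)
    (hK2 : K * EE + r * HH = 1)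
    (hs : s = -(K / 2) * g ^ 2 - r * g)
    (hl : l = -((K / 2) * (e + f) + r))
    (hq : q = -(K / 2) * (e * f) - (K / 2) * g ^ 2 - r * g)
    (hn1 : n1 = K * p ^ 2 + 2 * r * p)
    (hnu : nu = (-2 * K * c ^ 2 + K * c * e + K * c * f + 2 * K * p ^ 2
      - 2 * c * r + 4 * p * r) / 2)
    (hn2 : n2 = (-2 * K * c ^ 2 + K * c * e + K * c * f + 2 * K * d ^ 2
      - K * d * e - K * d * f - 4 * K * d + 2 * K * p ^ 2
      - 2 * c * r - 2 * d * r + 4 * p * r) / 2)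
    (A B : ℝ → ℝ)
    (hA : ∀ t : ℝ, A t = if t ≤ p then 0
      else if t ≤ c then -K * t ^ 2 - 2 * r * t + n1
      else if t ≤ d then l * t + nu
      else -K * t ^ 2 + 2 * K * t + n2)
    (hB : ∀ t : ℝ, B t = if t ≤ e then K / 2 * t ^ 2 + r * t + s
      else if t ≤ f then -l * t + q
      else if t ≤ g then K / 2 * t ^ 2 + r * t + s
      else 0)
    (Phi : ℝ)
    (hPhi : Phi = 4 * ∫ t in (0 : ℝ)..1, (A t + B t)) :
    401 * Phi ^ 3 - 1744 * Phi ^ 2 + 2240 * Phi - 768 = 0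
    ∧ 157 / 100 < Phi ∧ Phi < 158 / 100 := by
  obtain ⟨hp1, hp2⟩ := hpmem
  subst hd he hf hg hCC hDD hEE hHH hs hl hq hn1 hnu hn2
  have hD : (0:ℝ) < 71 * p ^ 2 - 66 * p + 11 := by
    nlinarith [sq_nonneg (p - 2115883 / 10 ^ 7)]
  have hD2 : (0:ℝ) < 2 * (71 * p ^ 2 - 66 * p + 11) := by linarith
  have hclb : 1 / 2 < c := by
    rw [hc, lt_div_iff₀ hD2]
    nlinarith [hproot, sq_nonneg (p - 2115883 / 10 ^ 7)]
  have hcub : c < 14 / 25 := by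
    rw [hc, div_lt_iff₀ hD2]
    nlinarith [hproot, sq_nonneg (p - 2115883 / 10 ^ 7)]
  have hp0 : (0:ℝ) ≤ p := by linarith
  have hpc : p < c := by linarith
  have hcd : c < 1 + p - c := by linarith
  have hd1 : 1 + p - c ≤ 1 := by linarith
  have he0 : (0:ℝ) ≤ (2 * c + 3 * p - 1) / 4 := by linarith
  have hef : (2 * c + 3 * p - 1) / 4 < (-2 * c + 5 * p + 1) / 4 := by linarith
  have hfg : (-2 * c + 5 * p + 1) / 4 < (1 - 3 * p + 2 * c) / 2 := by linarith
  have hg1 : (1 - 3 * p + 2 * c) / 2 ≤ 1 := by linarith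
  have hA0p := piece_eq A 0 0 0 0 p (by
    intro t ht
    rw [Set.uIcc_of_le hp0] at ht
    rw [hA t, if_pos ht.2]
    norm_num)
  have hApc := piece_eq A (-K) (-(2*r)) ((1)*p^2*K + (2)*p*r) p c (by
    intro t ht
    rw [Set.uIcc_of_le hpc.le] at ht
    rw [hA t]
    split_ifs with h1 h2 h3
    · have htp : t = p := le_antisymm h1 ht.1
      rw [htp]; ring
    · ring
    · exact absurd ht.2 h2
    · exact absurd ht.2 h2)
  have hAcd := piece_eq A 0 (-(K*p) - r) ((1)*p^2*K + (1)*p*c*K + (2)*p*r + (-1)*c^2*K + (-1)*c*r) c (1 + p - c) (by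
    intro t ht
    rw [Set.uIcc_of_le hcd.le] at ht
    rw [hA t]
    split_ifs with h1 h2 h3
    · exact absurd h1 (by push_neg; linarith [ht.1])
    · have htc : t = c := le_antisymm h2 ht.1
      rw [htc]; ring
    · ring
    · exact absurd ht.2 h3)
  have hAd1 := piece_eq A (-K) (2*K) ((1)*p^2*K + (-1)*p*K + (1)*p*r + (-1)*K + (-1)*r) (1 + p - c) 1 (by
    intro t ht
    rw [Set.uIcc_of_le hd1] at ht
    rw [hA t]
    split_ifs with h1 h2 h3
    · exact absurd h1 (by push_neg; linarith [ht.1])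
    · exact absurd h2 (by push_neg; linarith [ht.1])
    · have htd : t = 1 + p - c := le_antisymm h3 ht.1
      rw [htd]; ring
    · ring)
  have hB0e := piece_eq B (K/2) r ((-9/8)*p^2*K + (3/2)*p*c*K + (3/4)*p*K + (3/2)*p*r + (-1/2)*c^2*K + (-1/2)*c*K + (-1)*c*r + (-1/8)*K + (-1/2)*r) 0 ((2 * c + 3 * p - 1) / 4) (by
    intro t ht
    rw [Set.uIcc_of_le he0] at ht
    rw [hB t]
    split_ifs with h1 h2 h3
    · ring
    · exact absurd ht.2 h1
    · exact absurd ht.2 h1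
    · exact absurd ht.2 h1)
  have hBef := piece_eq B 0 (K*p + r) ((-51/32)*p^2*K + (11/8)*p*c*K + (13/16)*p*K + (3/2)*p*r + (-3/8)*c^2*K + (-5/8)*c*K + (-1)*c*r + (-3/32)*K + (-1/2)*r) ((2 * c + 3 * p - 1) / 4) ((-2 * c + 5 * p + 1) / 4) (by
    intro t ht
    rw [Set.uIcc_of_le hef.le] at ht
    rw [hB t]
    split_ifs with h1 h2 h3
    · have hte : t = (2 * c + 3 * p - 1) / 4 := le_antisymm h1 ht.1
      rw [hte]; ring
    · ring
    · exact absurd ht.2 h2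
    · exact absurd ht.2 h2)
  have hBfg := piece_eq B (K/2) r ((-9/8)*p^2*K + (3/2)*p*c*K + (3/4)*p*K + (3/2)*p*r + (-1/2)*c^2*K + (-1/2)*c*K + (-1)*c*r + (-1/8)*K + (-1/2)*r) ((-2 * c + 5 * p + 1) / 4) ((1 - 3 * p + 2 * c) / 2) (by
    intro t ht
    rw [Set.uIcc_of_le hfg.le] at ht
    rw [hB t]
    split_ifs with h1 h2 h3
    · exact absurd h1 (by push_neg; linarith [ht.1])
    · have htf : t = (-2 * c + 5 * p + 1) / 4 := le_antisymm h2 ht.1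
      rw [htf]; ring
    · ring
    · exact absurd ht.2 h3)
  have hBg1 := piece_eq B 0 0 0 ((1 - 3 * p + 2 * c) / 2) 1 (by
    intro t ht
    rw [Set.uIcc_of_le hg1] at ht
    rw [hB t]
    split_ifs with h1 h2 h3
    · exact absurd h1 (by push_neg; linarith [ht.1])
    · exact absurd h2 (by push_neg; linarith [ht.1])
    · have htg : t = (1 - 3 * p + 2 * c) / 2 := le_antisymm h3 ht.1
      rw [htg]; ring
    · norm_num)
  have hAint : IntervalIntegrable A MeasureTheory.volume 0 1 :=
    ((hA0p.1.trans hApc.1).trans hAcd.1).trans hAd1.1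
  have hBint : IntervalIntegrable B MeasureTheory.volume 0 1 :=
    ((hB0e.1.trans hBef.1).trans hBfg.1).trans hBg1.1
  have hDne : (2 * (71 * p ^ 2 - 66 * p + 11)) ≠ 0 := ne_of_gt hD2
  have hcD : c * (2 * (71 * p ^ 2 - 66 * p + 11)) = 187 * p ^ 3 - 211 * p ^ 2 + 61 * p - 5 := by
    rw [hc]; exact div_mul_cancel₀ _ hDne
  have hKd : ((-61/16)*p^3 + (-35/16)*p^2*c + (81/16)*p^2 + (13/2)*p*c^2 + (-11/8)*p*c + (-31/16)*p + (-7/4)*c^3 + (-3/2)*c^2 + (13/16)*c + (3/16)) * K = (-1/2)*p + (-1)*c + (1/2) := by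
    linear_combination ((11/2)*p + (-3)*c + (-3/2)) * hK1 - ((6)*p + (-2)*c + (-2)) * hK2
  have hrd : ((-61/16)*p^3 + (-35/16)*p^2*c + (81/16)*p^2 + (13/2)*p*c^2 + (-11/8)*p*c + (-31/16)*p + (-7/4)*c^3 + (-3/2)*c^2 + (13/16)*c + (3/16)) * r = (-21/32)*p^2 + (-3/8)*p*c + (11/16)*p + (11/8)*c^2 + (-3/8)*c + (-5/32) := by
    linear_combination ((-1/4)*p^2 + (3)*p*c + (1/2)*p + (-1)*c^2 + (-1)*c + (-1/4)) * hK2 - ((13/32)*p^2 + (27/8)*p*c + (-3/16)*p + (-19/8)*c^2 + (-5/8)*c + (-3/32)) * hK1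
  have hDneg : ((-61/16)*p^3 + (-35/16)*p^2*c + (81/16)*p^2 + (13/2)*p*c^2 + (-11/8)*p*c + (-31/16)*p + (-7/4)*c^3 + (-3/2)*c^2 + (13/16)*c + (3/16)) < 0 := by
    nlinarith [hproot, sq_nonneg (p - 2115883 / 10 ^ 7), sq_nonneg (c - 1/2), sq_nonneg (c - 14/25), mul_pos (sub_pos.mpr hclb) (sub_pos.mpr hcub)]
  have hBFne : ((2 * (71 * p ^ 2 - 66 * p + 11)) ^ 4 * ((-61/16)*p^3 + (-35/16)*p^2*c + (81/16)*p^2 + (13/2)*p*c^2 + (-11/8)*p*c + (-31/16)*p + (-7/4)*c^3 + (-3/2)*c^2 + (13/16)*c + (3/16))) ≠ 0 :=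
    ne_of_lt (mul_neg_of_pos_of_neg (pow_pos hD2 4) hDneg)
  have h0 : ((2 * (71 * p ^ 2 - 66 * p + 11)) ^ 4 * ((-61/16)*p^3 + (-35/16)*p^2*c + (81/16)*p^2 + (13/2)*p*c^2 + (-11/8)*p*c + (-31/16)*p + (-7/4)*c^3 + (-3/2)*c^2 + (13/16)*c + (3/16))) * (Phi - (2 - 2 * p)) = 0 := by
    rw [hPhi, intervalIntegral.integral_add hAint hBint,
      ← intervalIntegral.integral_add_adjacent_intervals ((hA0p.1.trans hApc.1).trans hAcd.1) hAd1.1,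
      ← intervalIntegral.integral_add_adjacent_intervals (hA0p.1.trans hApc.1) hAcd.1,
      ← intervalIntegral.integral_add_adjacent_intervals hA0p.1 hApc.1,
      ← intervalIntegral.integral_add_adjacent_intervals ((hB0e.1.trans hBef.1).trans hBfg.1) hBg1.1,
      ← intervalIntegral.integral_add_adjacent_intervals (hB0e.1.trans hBef.1) hBfg.1,
      ← intervalIntegral.integral_add_adjacent_intervals hB0e.1 hBef.1,
      hA0p.2, hApc.2, hAcd.2, hAd1.2, hB0e.2, hBef.2, hBfg.2, hBg1.2]
    linear_combination ((2 * (71 * p ^ 2 - 66 * p + 11)) ^ 4 * ((29/24)*p^3 + (-21/4)*p^2*c + (-3/8)*p^2 + (-3/2)*p*c^2 + (19/2)*p*c + (-3/8)*p + (11/3)*c^3 + (-11/2)*c^2 + (-5/4)*c + (-1/8))) * hKd +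
      ((2 * (71 * p ^ 2 - 66 * p + 11)) ^ 4 * ((-13/2)*p^2 + (2)*p*c + (11)*p + (2)*c^2 + (-6)*c + (-5/2))) * hrd +
      ((117817403/12)*p^9 + (22883229/2)*p^8*c + (-171313771/4)*p^8 + (-8705807)*p^7*c^2 + (-37559280)*p^7*c + (79769136)*p^7 + (-7874042/3)*p^6*c^3 + (30214547)*p^6*c^2 + (49401792)*p^6*c + (-247725622/3)*p^6 + (7319532)*p^5*c^3 + (-43123135)*p^5*c^2 + (-97819612/3)*p^5*c + (311131183/6)*p^5 + (-8023994)*p^4*c^3 + (97690241/3)*p^4*c^2 + (32160535/3)*p^4*c + (-40540467/2)*p^4 + (4376328)*p^3*c^3 + (-13940773)*p^3*c^2 + (-3579224/3)*p^3*c + (14645510/3)*p^3 + (-1243154)*p^2*c^3 + (10093699/3)*p^2*c^2 + (-216436)*p^2*c + (-2077988/3)*p^2 + (175692)*p*c^3 + (-424589)*p*c^2 + (205700/3)*p*c + (623887/12)*p + (-29282/3)*c^3 + (65219/3)*c^2 + (-29645/6)*c + (-18469/12)) * hcD + ((559760)*p^9 + (-2783792)*p^8 + (5902448)*p^7 + (-6974896)*p^6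 + (5042576)*p^5 + (-2305424)*p^4 + (1996016/3)*p^3 + (-350768/3)*p^2 + (34144/3)*p + (-1408/3)) * hproot
  have hPhieq : Phi = 2 - 2 * p := by
    rcases mul_eq_zero.mp h0 with h | h
    · exact absurd h hBFne
    · linarith
  refine ⟨?_, ?_, ?_⟩
  · rw [hPhieq]; linear_combination (-8 : ℝ) * hproot
  · rw [hPhieq]; linarith
  · rw [hPhieq]; linarith
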